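/- Let n ≥ 2 be an even integer and 0 < p ≤ 1/2. Under the random flip model applied to Y_n with flip probability p, the probability that the resulting random matrix X fails the 2-configuration exhibiting condition is at most 2·n·(n−1)·(1−p²)^n. -/

import Mathlib

open MeasureTheory Finset
open scoped ENNReal


noncomputable section Aux2

variable {n : ℕ} (q : ℝ≥0∞) (hq : q ≤ 1)

/-- weight of a single bit -/
def wB (q : ℝ≥0∞) : Bool → ℝ≥0∞ := fun b => Bool.rec (1 - q) q b

lemma wB_sum (hq : q ≤ 1) : wB q true + wB q false = 1 := by
  simp only [wB]
  exact add_tsub_cancel_of_le hq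

lemma bern_singleton (q : NNReal) (hq : q ≤ 1) (b : Bool) :
    (PMF.bernoulli q hq).toMeasure {b} = wB (q : ℝ≥0∞) b := by
  rw [PMF.toMeasure_apply_singleton _ _ (measurableSet_singleton b)]
  cases b <;> simp [PMF.bernoulli_apply, wB, ENNReal.coe_sub]

lemma pi_singleton (q : NNReal) (hq : q ≤ 1) (F : Fin n × Fin n → Bool) :
    (Measure.pi fun _ : Fin n × Fin n => (PMF.bernoulli q hq).toMeasure) {F}
      = ∏ c : Fin n × Fin n, wB (q : ℝ≥0∞) (F c) := by
  rw [← Set.univ_pi_singleton F, Measure.pi_pi]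
  exact Finset.prod_congr rfl fun c _ => bern_singleton q hq (F c)

/-- sum of weights over all bit-vectors equals 1 -/
lemma total_sum (hq : q ≤ 1) (m : ℕ) :
    ∑ h : Fin m → Bool, ∏ c : Fin m, wB q (h c) = 1 := by
  classical
  have := Finset.prod_univ_sum (fun _ : Fin m => (Finset.univ : Finset Bool))
      (fun _ b => wB q b)
  rw [Fintype.piFinset_univ] at this
  rw [← this]
  simp [Fintype.sum_bool, wB_sum q hq]

end Aux2

section MES
open scoped Classical
lemma meas_eq_sum {α : Type*} [Fintype α] [MeasurableSpace α] [MeasurableSingletonClass α]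
    (μ : Measure α) (s : Set α) :
    μ s = ∑ x ∈ Finset.univ.filter (· ∈ s), μ {x} := by
  classical
  have hs : s = ⋃ x ∈ Finset.univ.filter (· ∈ s), ({x} : Set α) := by
    ext y; simp
  conv_lhs => rw [hs]
  rw [measure_biUnion_finset ?_ (fun _ _ => measurableSet_singleton _)]
  intro x _ y _ hxy
  simp [Function.onFun, Set.disjoint_singleton, hxy]
end MES

section Aux3
open scoped Classical

lemma matched_sum (q : ℝ≥0∞) (hq : q ≤ 1) (m : ℕ) (l₁ l₂ : Fin m) (hl : l₁ ≠ l₂)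
    (b₁ b₂ : Bool) :
    ∑ h ∈ Finset.univ.filter (fun h : Fin m → Bool => h l₁ = b₁ ∧ h l₂ = b₂),
        ∏ c, wB q (h c) = wB q b₁ * wB q b₂ := by
  classical
  set t : Fin m → Finset Bool :=
    fun c => if c = l₁ then {b₁} else if c = l₂ then {b₂} else Finset.univ with ht
  have hpi : Fintype.piFinset t
      = Finset.univ.filter (fun h : Fin m → Bool => h l₁ = b₁ ∧ h l₂ = b₂) := by
    ext g
    simp only [Fintype.mem_piFinset, mem_filter, mem_univ, true_and]
    constructor
    · intro h
      refine ⟨?_, ?_⟩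
      · have := h l₁; simpa [ht] using this
      · have := h l₂; simpa [ht, hl.symm] using this
    · rintro ⟨h1, h2⟩ c
      by_cases hc1 : c = l₁
      · subst hc1; simp [ht, h1]
      · by_cases hc2 : c = l₂
        · subst hc2; simp [ht, hc1, h2]
        · simp [ht, hc1, hc2]
  have hps := Finset.prod_univ_sum t (fun _ b => wB q b)
  rw [hpi] at hps
  rw [← hps]
  have hout : ∀ c ∈ (Finset.univ : Finset (Fin m)),
      c ∉ ({l₁, l₂} : Finset (Fin m)) → (∑ b ∈ t c, wB q b) = 1 := by
    intro c _ hc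
    simp only [mem_insert, mem_singleton, not_or] at hc
    simp [ht, hc.1, hc.2, Fintype.sum_bool, wB_sum q hq]
  rw [← Finset.prod_subset (subset_univ ({l₁, l₂} : Finset (Fin m))) hout]
  rw [Finset.prod_pair hl]
  simp [ht, hl.symm]

lemma wB_le_one (q : ℝ≥0∞) (hq : q ≤ 1) (b : Bool) : wB q b ≤ 1 := by
  cases b
  · exact tsub_le_self
  · exact hq

lemma wB_ge (p : ℝ) (hp0 : 0 < p) (hp1 : p ≤ 1 / 2) (b : Bool) :
    ENNReal.ofReal p ≤ wB (ENNReal.ofReal p) b := by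
  cases b
  · show ENNReal.ofReal p ≤ 1 - ENNReal.ofReal p
    rw [← ENNReal.ofReal_one, ← ENNReal.ofReal_sub _ hp0.le]
    exact ENNReal.ofReal_le_ofReal (by linarith)
  · exact le_rfl

lemma row_sum_bound (p : ℝ) (hp0 : 0 < p) (hp1 : p ≤ 1 / 2) (m : ℕ)
    (l₁ l₂ : Fin m) (hl : l₁ ≠ l₂) (b₁ b₂ : Bool) :
    ∑ h ∈ Finset.univ.filter (fun h : Fin m → Bool => ¬(h l₁ = b₁ ∧ h l₂ = b₂)),
        ∏ c, wB (ENNReal.ofReal p) (h c) ≤ ENNReal.ofReal (1 - p ^ 2) := by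
  classical
  set q := ENNReal.ofReal p with hqdef
  have hq : q ≤ 1 := ENNReal.ofReal_le_one.mpr (by linarith)
  have hsplit := Finset.sum_filter_add_sum_filter_not Finset.univ
    (fun h : Fin m → Bool => h l₁ = b₁ ∧ h l₂ = b₂) (fun h => ∏ c, wB q (h c))
  rw [matched_sum q hq m l₁ l₂ hl b₁ b₂, total_sum q hq m] at hsplit
  have hMtop : wB q b₁ * wB q b₂ ≠ ⊤ :=
    (lt_of_le_of_lt (mul_le_one' (wB_le_one q hq b₁) (wB_le_one q hq b₂))
      ENNReal.one_lt_top).ne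
  have hS : ∑ h ∈ Finset.univ.filter (fun h : Fin m → Bool => ¬(h l₁ = b₁ ∧ h l₂ = b₂)),
      ∏ c, wB q (h c) = 1 - wB q b₁ * wB q b₂ := by
    refine ENNReal.eq_sub_of_add_eq hMtop ?_
    rw [add_comm]; exact hsplit
  rw [hS]
  have hM_ge : ENNReal.ofReal (p ^ 2) ≤ wB q b₁ * wB q b₂ := by
    calc ENNReal.ofReal (p ^ 2) = ENNReal.ofReal p * ENNReal.ofReal p := by
          rw [← ENNReal.ofReal_mul hp0.le, sq]
      _ ≤ wB q b₁ * wB q b₂ :=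
          mul_le_mul' (wB_ge p hp0 hp1 b₁) (wB_ge p hp0 hp1 b₂)
  calc (1 : ℝ≥0∞) - wB q b₁ * wB q b₂ ≤ 1 - ENNReal.ofReal (p ^ 2) :=
        tsub_le_tsub_left hM_ge 1
    _ = ENNReal.ofReal (1 - p ^ 2) := by
        rw [← ENNReal.ofReal_one, ← ENNReal.ofReal_sub _ (sq_nonneg p)]

end Aux3

section Aux4
open scoped Classical

lemma event_bound (p : ℝ) (hp0 : 0 < p) (hp1 : p ≤ 1 / 2) (n : ℕ)
    (hq : Real.toNNReal p ≤ 1) (l₁ l₂ : Fin n) (hl : l₁ ≠ l₂) (b₁ b₂ : Bool) :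
    (Measure.pi fun _ : Fin n × Fin n => (PMF.bernoulli (Real.toNNReal p) hq).toMeasure)
      {F : Fin n × Fin n → Bool | ∀ j : Fin n, ¬(F (j, l₁) = b₁ ∧ F (j, l₂) = b₂)}
      ≤ ENNReal.ofReal ((1 - p ^ 2) ^ n) := by
  classical
  set T : Finset (Fin n → Bool) :=
    Finset.univ.filter (fun h : Fin n → Bool => ¬(h l₁ = b₁ ∧ h l₂ = b₂)) with hT
  rw [meas_eq_sum]
  refine le_trans (le_of_eq (Finset.sum_congr rfl fun F _ =>
    pi_singleton (Real.toNNReal p) hq F)) ?_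
  calc _
      = ∑ g ∈ Fintype.piFinset (fun _ : Fin n => T), ∏ j : Fin n, ∏ c : Fin n, wB (ENNReal.ofReal p) (g j c) := by
        refine Finset.sum_nbij' (fun F => fun j c => F (j, c)) (fun g => fun x => g x.1 x.2)
          ?_ ?_ ?_ ?_ ?_
        · intro F hF
          simp only [Finset.mem_filter, Finset.mem_univ, true_and, Set.mem_setOf_eq] at hF
          simp only [Fintype.mem_piFinset, hT, Finset.mem_filter, Finset.mem_univ, true_and]
          exact hF
        · intro g hg
          simp only [Fintype.mem_piFinset, hT, Finset.mem_filter, Finset.mem_univ, true_and] at hg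
          simp only [Finset.mem_filter, Finset.mem_univ, true_and, Set.mem_setOf_eq]
          exact hg
        · intro F _; rfl
        · intro g _; rfl
        · intro F _; exact Fintype.prod_prod_type _
    _ = ∏ j : Fin n, ∑ h ∈ T, ∏ c : Fin n, wB (ENNReal.ofReal p) (h c) :=
        (Finset.prod_univ_sum (fun _ : Fin n => T) (fun _ h => ∏ c : Fin n, wB (ENNReal.ofReal p) (h c))).symm
    _ = (∑ h ∈ T, ∏ c : Fin n, wB (ENNReal.ofReal p) (h c)) ^ n := by
        rw [Finset.prod_const, Finset.card_univ, Fintype.card_fin]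
    _ ≤ (ENNReal.ofReal (1 - p ^ 2)) ^ n :=
        pow_le_pow_left' (row_sum_bound p hp0 hp1 n l₁ l₂ hl b₁ b₂) n
    _ = ENNReal.ofReal ((1 - p ^ 2) ^ n) :=
        (ENNReal.ofReal_pow (by nlinarith) n).symm

end Aux4


/-- The `k`-configuration exhibiting condition. -/
def ConfigExhibit {n m : ℕ} (k : ℕ) (X : Fin n → Fin m → ℝ) : Prop :=
  ∀ σ : Fin k → ℝ, (∀ i, σ i = 0 ∨ σ i = 1) →
    ∀ l : Fin k → Fin m, StrictMono l →
      ∃ j : Fin n, ∀ i : Fin k, X j (l i) = σ i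

/-- The `n × n` matrix whose first `n/2` columns are constantly `1` and whose
remaining columns are constantly `0`. -/
def Ymat (n : ℕ) : Fin n → Fin n → ℝ :=
  fun _ j => if (j : ℕ) < n / 2 then 1 else 0

/-- The matrix obtained from `Y_n` by flipping the entries indicated by the
flip pattern `F`. -/
def flipMat (n : ℕ) (F : Fin n × Fin n → Bool) : Fin n → Fin n → ℝ :=
  fun i j => if F (i, j) then 1 - Ymat n i j else Ymat n i j

lemma flip_iff (n : ℕ) (F : Fin n × Fin n → Bool) (j c : Fin n) (v : ℝ) (hv : v = 0 ∨ v = 1) :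
    (flipMat n F j c = v) ↔
      F (j, c) = (if (if (c : ℕ) < n / 2 then (1:ℝ) else 0) = v then false else true) := by
  unfold flipMat Ymat
  by_cases hc : (c : ℕ) < n / 2 <;> rcases hv with hv|hv <;> subst hv <;>
    cases hF : F (j, c) <;> simp [hc, hF] <;> norm_num


lemma ltpairs_card (n : ℕ) (hn : 2 ≤ n) :
    ∃ c : ℕ, (Finset.univ.filter (fun l : Fin n × Fin n => l.1 < l.2)).card = c ∧
      4 * c = 2 * (n * (n - 1)) := by
  classical
  set P := Finset.univ.filter (fun l : Fin n × Fin n => l.1 < l.2) with hP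
  set Pg := Finset.univ.filter (fun l : Fin n × Fin n => l.2 < l.1) with hPg
  have hswap : P.card = Pg.card := by
    refine Finset.card_nbij' Prod.swap Prod.swap ?_ ?_ ?_ ?_
    · intro a ha; simp only [hP, hPg, Finset.mem_coe, mem_filter, mem_univ, true_and] at *; exact ha
    · intro a ha; simp only [hP, hPg, Finset.mem_coe, mem_filter, mem_univ, true_and] at *; exact ha
    · intro a _; rfl
    · intro a _; rfl
  have hdisj : Disjoint P Pg := by
    rw [Finset.disjoint_left]
    intro a haP haPg
    simp only [hP, hPg, mem_filter, mem_univ, true_and] at haP haPg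
    exact absurd haPg (not_lt_of_gt haP)
  have hunion : P ∪ Pg = (Finset.univ : Finset (Fin n)).offDiag := by
    ext a
    simp only [hP, hPg, Finset.mem_union, mem_filter, mem_univ, true_and,
      Finset.mem_offDiag]
    constructor
    · rintro (h | h)
      · exact ne_of_lt h
      · exact ne_of_gt h
    · intro h
      exact lt_or_gt_of_ne h
  have hcard2 : P.card + Pg.card = n * n - n := by
    rw [← Finset.card_union_of_disjoint hdisj, hunion, Finset.offDiag_card,
      Finset.card_univ, Fintype.card_fin]
  refine ⟨P.card, rfl, ?_⟩
  have hnn : n * n - n = n * (n - 1) := by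
    obtain ⟨m, rfl⟩ : ∃ m, n = m + 1 := ⟨n - 1, by omega⟩
    have h : (m + 1) * (m + 1) = (m + 1) * m + (m + 1) := by ring
    simp only [Nat.add_sub_cancel, h, Nat.add_sub_cancel]
  omega


/-- Under the random flip model applied to `Y_n` with flip probability `p ∈ (0, 1/2]`,
the probability that the resulting matrix fails the `2`-configuration exhibiting
condition is at most `2 · n · (n - 1) · (1 - p²)ⁿ`. -/
theorem prob_config_fail_le (n : ℕ) (hn : 2 ≤ n) (hev : Even n)
    (p : ℝ) (hp0 : 0 < p) (hp1 : p ≤ 1 / 2) :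
    (Measure.pi fun _ : Fin n × Fin n =>
        (PMF.bernoulli (Real.toNNReal p)
          (by exact Real.toNNReal_le_one.mpr (by linarith))).toMeasure)
      {F : Fin n × Fin n → Bool | ¬ ConfigExhibit 2 (flipMat n F)}
      ≤ ENNReal.ofReal (2 * n * (n - 1) * (1 - p ^ 2) ^ n) := by
  classical
  set q := Real.toNNReal p with hqdef
  have hq : q ≤ 1 := Real.toNNReal_le_one.mpr (by linarith)
  set P := Finset.univ.filter (fun l : Fin n × Fin n => l.1 < l.2) with hP
  set I : Finset ((Bool × Bool) × (Fin n × Fin n)) := Finset.univ ×ˢ P with hI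
  set E : (Bool × Bool) × (Fin n × Fin n) → Set (Fin n × Fin n → Bool) :=
    fun x => {F | ∀ j : Fin n, ¬(F (j, x.2.1) = x.1.1 ∧ F (j, x.2.2) = x.1.2)} with hE
  have hsub : {F : Fin n × Fin n → Bool | ¬ ConfigExhibit 2 (flipMat n F)} ⊆ ⋃ x ∈ I, E x := by
    intro F hF
    simp only [Set.mem_setOf_eq] at hF
    unfold ConfigExhibit at hF
    push_neg at hF
    obtain ⟨σ, hσ, l, hmono, hfail⟩ := hF
    have hl01 : l 0 < l 1 := hmono (by decide : (0 : Fin 2) < 1)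
    set b : Fin 2 → Bool :=
      fun i => if (if ((l i : ℕ)) < n / 2 then (1:ℝ) else 0) = σ i then false else true with hb
    have hmemI : ((b 0, b 1), (l 0, l 1)) ∈ I := by
      simp [hI, hP, hl01]
    refine Set.mem_biUnion hmemI ?_
    simp only [hE, Set.mem_setOf_eq]
    rintro j ⟨h0, h1⟩
    obtain ⟨i, hi⟩ := hfail j
    apply hi
    have key : ∀ i : Fin 2, F (j, l i) = b i → flipMat n F j (l i) = σ i := by
      intro i hFi
      exact (flip_iff n F j (l i) (σ i) (hσ i)).mpr hFi
    fin_cases i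
    · exact key 0 h0
    · exact key 1 h1
  have hbound : ∀ x ∈ I, (Measure.pi fun _ : Fin n × Fin n =>
      (PMF.bernoulli q hq).toMeasure) (E x) ≤ ENNReal.ofReal ((1 - p ^ 2) ^ n) := by
    rintro ⟨⟨b₁, b₂⟩, ⟨l₁, l₂⟩⟩ hx
    have hlt : l₁ < l₂ := by
      simp only [hI, hP, Finset.mem_product, Finset.mem_filter, Finset.mem_univ,
        true_and] at hx
      exact hx
    exact event_bound p hp0 hp1 n hq l₁ l₂ (ne_of_lt hlt) b₁ b₂
  obtain ⟨c, hc, h4c⟩ := ltpairs_card n hn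
  have hcardI : I.card = 4 * c := by
    rw [hI, Finset.card_product, Finset.card_univ, ← hc]
    simp [Fintype.card_prod]
    rfl
  calc (Measure.pi fun _ : Fin n × Fin n => (PMF.bernoulli q hq).toMeasure)
        {F : Fin n × Fin n → Bool | ¬ ConfigExhibit 2 (flipMat n F)}
      ≤ (Measure.pi fun _ : Fin n × Fin n => (PMF.bernoulli q hq).toMeasure)
        (⋃ x ∈ I, E x) := measure_mono hsub
    _ ≤ ∑ x ∈ I, (Measure.pi fun _ : Fin n × Fin n =>
        (PMF.bernoulli q hq).toMeasure) (E x) := measure_biUnion_finset_le I E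
    _ ≤ ∑ _x ∈ I, ENNReal.ofReal ((1 - p ^ 2) ^ n) := Finset.sum_le_sum hbound
    _ = (I.card : ℝ≥0∞) * ENNReal.ofReal ((1 - p ^ 2) ^ n) := by
        rw [Finset.sum_const, nsmul_eq_mul]
    _ = ENNReal.ofReal ((I.card : ℝ) * (1 - p ^ 2) ^ n) := by
        rw [ENNReal.ofReal_mul (by positivity), ENNReal.ofReal_natCast]
    _ ≤ ENNReal.ofReal (2 * n * (n - 1) * (1 - p ^ 2) ^ n) := by
        apply ENNReal.ofReal_le_ofReal
        have hcast : ((I.card : ℕ) : ℝ) = 2 * (n : ℝ) * ((n : ℝ) - 1) := by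
          rw [hcardI]
          have : (4 * c : ℕ) = 2 * (n * (n - 1)) := h4c
          rw [this]
          push_cast [Nat.cast_sub (by omega : 1 ≤ n)]
          ring
        rw [hcast]
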